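/- Let H be a real Hilbert space, λ > 0, and φ : ℝ^d → H with ‖φ(z)‖_H ≤ 1 for all z. Let μ : ℝ^d → ℝ be a fixed function (the conditional mean E[X | Z = ·]). Let D = (X^{(0)},…,X^{(m)}, Y, Z) and D' = (X'^{(0)},…,X'^{(m)}, Y', Z') be two datasets of n rows each, where X^{(j)} = (x^{(j)}_1,…,x^{(j)}_n) ∈ ℝ^n, Y = (y_1,…,y_n) ∈ ℝ^n, Z = (z_1,…,z_n) ∈ (ℝ^d)^n, that differ in at most one row index. Assume |y_i|, |y'_i| ≤ 1 for all i, and that the exact residuals r^{(j)}_{X,i} = x^{(j)}_i − μ(z_i) and r'^{(j)}_{X,i} = x'^{(j)}_i − μ(z'_i) satisfy |r^{(j)}_{X,i}|, |r'^{(j)}_{X,i}| ≤ 1 for all i ∈ [n], j ∈ {0,…,m}. Let w_Y and w'_Y be KRR minimizers (regularization λ) for fitting Y to Z and Y' to Z' respectively, and define T_j = Σ_{i=1}^n r^{(j)}_{X,i}·(y_i − ⟨w_Y, φ(z_i)⟩) and T'_j = Σ_{i=1}^n r'^{(j)}_{X,i}·(y'_i − ⟨w'_Y, φ(z'_i)⟩).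 Then for every j ∈ {0,…,m}, |T_j − T'_j| ≤ C', where C' = 4(1 + √2/√λ + 2√2/λ^{3/2} + 2/λ). -/

import Mathlib

open scoped RealInnerProductSpace

private lemma krr_norm_bound {H : Type*} [NormedAddCommGroup H] [InnerProductSpace ℝ H]
    {n : ℕ} (hn : 0 < n) {lam : ℝ} (hlam : 0 < lam)
    (u : Fin n → H) (y : Fin n → ℝ) (hy : ∀ i, |y i| ≤ 1) (w : H)
    (hw : ∀ v : H, lam / 2 * ‖w‖ ^ 2 + (1 / n) * ∑ i, (y i - ⟪w, u i⟫) ^ 2 ≤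
        lam / 2 * ‖v‖ ^ 2 + (1 / n) * ∑ i, (y i - ⟪v, u i⟫) ^ 2) :
    ‖w‖ ≤ Real.sqrt (2 / lam) := by
  have hn' : (0:ℝ) < n := by exact_mod_cast hn
  have h0 := hw 0
  simp only [inner_zero_left, norm_zero, sub_zero] at h0
  have hsum : ∑ i, (y i) ^ 2 ≤ (n:ℝ) := by
    calc ∑ i, (y i) ^ 2 ≤ ∑ _i : Fin n, (1:ℝ) := by
          apply Finset.sum_le_sum
          intro i _
          have := hy i
          nlinarith [abs_nonneg (y i), sq_abs (y i)]
      _ = (n:ℝ) := by simp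
  have hnn : (0:ℝ) ≤ (1 / n) * ∑ i, (y i - ⟪w, u i⟫) ^ 2 := by positivity
  have h1 : lam / 2 * ‖w‖ ^ 2 ≤ 1 := by
    have h2 : (1 / (n:ℝ)) * ∑ i, (y i) ^ 2 ≤ 1 := by
      rw [one_div, inv_mul_le_iff₀ hn', mul_one]; exact hsum
    nlinarith [h0]

  have h3 : ‖w‖ ^ 2 ≤ 2 / lam := by
    rw [le_div_iff₀ hlam]; nlinarith
  exact (Real.le_sqrt (norm_nonneg w) (by positivity)).mpr h3

private lemma krr_strong {H : Type*} [NormedAddCommGroup H] [InnerProductSpace ℝ H]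
    {n : ℕ} {lam : ℝ}
    (u : Fin n → H) (y : Fin n → ℝ) (w : H)
    (hw : ∀ v : H, lam / 2 * ‖w‖ ^ 2 + (1 / n) * ∑ i, (y i - ⟪w, u i⟫) ^ 2 ≤
        lam / 2 * ‖v‖ ^ 2 + (1 / n) * ∑ i, (y i - ⟪v, u i⟫) ^ 2)
    (v : H) :
    lam / 4 * ‖v - w‖ ^ 2 + (lam / 2 * ‖w‖ ^ 2 + (1 / n) * ∑ i, (y i - ⟪w, u i⟫) ^ 2) ≤
      lam / 2 * ‖v‖ ^ 2 + (1 / n) * ∑ i, (y i - ⟪v, u i⟫) ^ 2 := by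
  set m : H := (2⁻¹ : ℝ) • (w + v) with hmdef
  have hinner : ∀ i, ⟪m, u i⟫ = (⟪w, u i⟫ + ⟪v, u i⟫) / 2 := by
    intro i
    rw [hmdef, real_inner_smul_left, inner_add_left]
    ring
  have hnormm : ‖m‖ ^ 2 = (‖w‖ ^ 2 + ‖v‖ ^ 2) / 2 - ‖v - w‖ ^ 2 / 4 := by
    have hp := parallelogram_law_with_norm ℝ w v
    have h1 : ‖m‖ = ‖w + v‖ / 2 := by
      rw [hmdef, norm_smul]
      simp
      ring
    have h2 : ‖v - w‖ = ‖w - v‖ := norm_sub_rev _ _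
    rw [h1, h2]
    nlinarith [hp]
  have hsum : ∑ i, (y i - ⟪m, u i⟫) ^ 2 ≤
      (∑ i, (y i - ⟪w, u i⟫) ^ 2) / 2 + (∑ i, (y i - ⟪v, u i⟫) ^ 2) / 2 := by
    calc ∑ i, (y i - ⟪m, u i⟫) ^ 2
        ≤ ∑ i, ((y i - ⟪w, u i⟫) ^ 2 / 2 + (y i - ⟪v, u i⟫) ^ 2 / 2) := by
          apply Finset.sum_le_sum
          intro i _
          rw [hinner i]
          nlinarith [sq_nonneg (⟪w, u i⟫ - ⟪v, u i⟫)]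
      _ = _ := by rw [Finset.sum_add_distrib, Finset.sum_div, Finset.sum_div]
  have hm := hw m
  have hc : (0:ℝ) ≤ 1 / (n:ℝ) := by positivity
  have hL2 := mul_le_mul_of_nonneg_left hsum hc
  rw [hnormm] at hm
  nlinarith [hm, hL2]

/-- **Sensitivity of the CRT statistic.**
With a fixed conditional-mean function `μ = E[X | Z = ·]`, neighboring aggregated
datasets `D = (X^{(0)},…,X^{(m)}, Y, Z)` and `D'` (differing in at most one row),
`|y_i|, |y'_i| ≤ 1`, exact residuals `r^{(j)}_{X,i} = x^{(j)}_i − μ(z_i)` bounded by `1`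
in absolute value, and `w_Y, w'_Y` KRR minimizers (regularization `λ`) for fitting
`Y` to `Z` resp. `Y'` to `Z'`, the statistics
`T_j = Σ_i r^{(j)}_{X,i} (y_i − ⟨w_Y, φ(z_i)⟩)` satisfy
`|T_j − T'_j| ≤ 4(1 + √2/√λ + 2√2/λ^{3/2} + 2/λ)` for every `j`. -/
theorem crt_statistic_sensitivity
    {H : Type*} [NormedAddCommGroup H] [InnerProductSpace ℝ H] [CompleteSpace H]
    {d n m : ℕ} (hn : 0 < n)
    (lam : ℝ) (hlam : 0 < lam)
    (φ : EuclideanSpace ℝ (Fin d) → H) (hφ : ∀ z, ‖φ z‖ ≤ 1)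
    (μ : EuclideanSpace ℝ (Fin d) → ℝ)
    (X X' : Fin (m + 1) → Fin n → ℝ) (y y' : Fin n → ℝ)
    (z z' : Fin n → EuclideanSpace ℝ (Fin d))
    (hy : ∀ i, |y i| ≤ 1) (hy' : ∀ i, |y' i| ≤ 1)
    (hrX : ∀ j i, |X j i - μ (z i)| ≤ 1) (hrX' : ∀ j i, |X' j i - μ (z' i)| ≤ 1)
    (hneighbor : ∃ i₀ : Fin n, ∀ i, i ≠ i₀ →
      (∀ j, X j i = X' j i) ∧ y i = y' i ∧ z i = z' i)
    (wY wY' : H)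
    (hwY : ∀ v : H,
      lam / 2 * ‖wY‖ ^ 2 + (1 / n) * ∑ i, (y i - ⟪wY, φ (z i)⟫) ^ 2 ≤
        lam / 2 * ‖v‖ ^ 2 + (1 / n) * ∑ i, (y i - ⟪v, φ (z i)⟫) ^ 2)
    (hwY' : ∀ v : H,
      lam / 2 * ‖wY'‖ ^ 2 + (1 / n) * ∑ i, (y' i - ⟪wY', φ (z' i)⟫) ^ 2 ≤
        lam / 2 * ‖v‖ ^ 2 + (1 / n) * ∑ i, (y' i - ⟪v, φ (z' i)⟫) ^ 2) :
    ∀ j : Fin (m + 1),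
      |(∑ i, (X j i - μ (z i)) * (y i - ⟪wY, φ (z i)⟫)) -
        (∑ i, (X' j i - μ (z' i)) * (y' i - ⟪wY', φ (z' i)⟫))| ≤
      4 * (1 + Real.sqrt 2 / Real.sqrt lam + 2 * Real.sqrt 2 / lam ^ ((3 : ℝ) / 2) + 2 / lam) := by
  intro j
  obtain ⟨i₀, hnb⟩ := hneighbor
  have hn' : (0:ℝ) < n := by exact_mod_cast hn
  set B := Real.sqrt (2 / lam) with hBdef
  have hB0 : 0 ≤ B := Real.sqrt_nonneg _
  have hwn : ‖wY‖ ≤ B := krr_norm_bound hn hlam (fun i => φ (z i)) y hy wY hwY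
  have hwn' : ‖wY'‖ ≤ B := krr_norm_bound hn hlam (fun i => φ (z' i)) y' hy' wY' hwY'
  have hstr := krr_strong (fun i => φ (z i)) y wY hwY wY'
  have hstr' := krr_strong (fun i => φ (z' i)) y' wY' hwY' wY
  have hsymm : ‖wY - wY'‖ = ‖wY' - wY‖ := norm_sub_rev _ _
  rw [hsymm] at hstr'
  have hD0 : (0:ℝ) ≤ ‖wY' - wY‖ := norm_nonneg _
  -- inner product bounds
  have hip : ∀ (ww : H) (p : EuclideanSpace ℝ (Fin d)), |⟪ww, φ p⟫| ≤ ‖ww‖ := by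
    intro ww p
    calc |⟪ww, φ p⟫| ≤ ‖ww‖ * ‖φ p‖ := abs_real_inner_le_norm _ _
      _ ≤ ‖ww‖ := mul_le_of_le_one_right (norm_nonneg _) (hφ p)
  -- one-point squared loss difference bound
  have hdiff : ∀ (w1 w2 : H) (c : ℝ) (p : EuclideanSpace ℝ (Fin d)),
      ‖w1‖ ≤ B → ‖w2‖ ≤ B → |c| ≤ 1 → ‖w1 - w2‖ ≤ ‖wY' - wY‖ →
      (c - ⟪w2, φ p⟫) ^ 2 - (c - ⟪w1, φ p⟫) ^ 2 ≤ (2 + 2 * B) * ‖wY' - wY‖ := by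
    intro w1 w2 c p h1 h2 hc hd
    have ha : |⟪w1, φ p⟫| ≤ B := (hip w1 p).trans h1
    have hb : |⟪w2, φ p⟫| ≤ B := (hip w2 p).trans h2
    have hab : |⟪w1, φ p⟫ - ⟪w2, φ p⟫| ≤ ‖wY' - wY‖ := by
      rw [← inner_sub_left]
      exact (hip _ p).trans hd
    have ha' := abs_le.mp ha
    have hb' := abs_le.mp hb
    have hc' := abs_le.mp hc
    have habs2 : |2 * c - ⟪w1, φ p⟫ - ⟪w2, φ p⟫| ≤ 2 + 2 * B :=
      abs_le.mpr ⟨by linarith, by linarith⟩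
    calc (c - ⟪w2, φ p⟫) ^ 2 - (c - ⟪w1, φ p⟫) ^ 2
        = (⟪w1, φ p⟫ - ⟪w2, φ p⟫) * (2 * c - ⟪w1, φ p⟫ - ⟪w2, φ p⟫) := by ring
      _ ≤ |(⟪w1, φ p⟫ - ⟪w2, φ p⟫) * (2 * c - ⟪w1, φ p⟫ - ⟪w2, φ p⟫)| := le_abs_self _
      _ = |⟪w1, φ p⟫ - ⟪w2, φ p⟫| * |2 * c - ⟪w1, φ p⟫ - ⟪w2, φ p⟫| := abs_mul _ _
      _ ≤ ‖wY' - wY‖ * (2 + 2 * B) := mul_le_mul hab habs2 (abs_nonneg _) hD0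
      _ = (2 + 2 * B) * ‖wY' - wY‖ := by ring
  -- cancellation at non-differing rows
  have hkey : (∑ i, (y i - ⟪wY', φ (z i)⟫) ^ 2) - (∑ i, (y i - ⟪wY, φ (z i)⟫) ^ 2)
      + (∑ i, (y' i - ⟪wY, φ (z' i)⟫) ^ 2) - (∑ i, (y' i - ⟪wY', φ (z' i)⟫) ^ 2)
      = (y i₀ - ⟪wY', φ (z i₀)⟫) ^ 2 - (y i₀ - ⟪wY, φ (z i₀)⟫) ^ 2
        + (y' i₀ - ⟪wY, φ (z' i₀)⟫) ^ 2 - (y' i₀ - ⟪wY', φ (z' i₀)⟫) ^ 2 := by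
    simp only [← Finset.sum_sub_distrib, ← Finset.sum_add_distrib]
    apply Finset.sum_eq_single_of_mem i₀ (Finset.mem_univ _)
    intro i _ hi
    obtain ⟨hx, hyy, hz⟩ := hnb i hi
    rw [hyy, hz]
    ring
  -- stability bound
  have hbr1 := hdiff wY wY' (y i₀) (z i₀) hwn hwn' (hy i₀) hsymm.le
  have hbr2 := hdiff wY' wY (y' i₀) (z' i₀) hwn' hwn (hy' i₀) le_rfl
  have hc : (0:ℝ) ≤ 1 / (n:ℝ) := by positivity
  have hbr : (∑ i, (y i - ⟪wY', φ (z i)⟫) ^ 2) - (∑ i, (y i - ⟪wY, φ (z i)⟫) ^ 2)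
      + (∑ i, (y' i - ⟪wY, φ (z' i)⟫) ^ 2) - (∑ i, (y' i - ⟪wY', φ (z' i)⟫) ^ 2)
      ≤ 2 * ((2 + 2 * B) * ‖wY' - wY‖) := by
    rw [hkey]; linarith
  have h5 := mul_le_mul_of_nonneg_left hbr hc
  have hstab2 : lam / 2 * ‖wY' - wY‖ ^ 2 ≤ (1 / n) * (2 * ((2 + 2 * B) * ‖wY' - wY‖)) := by
    linarith [hstr, hstr', h5]
  -- n * Δ bound
  have hnd : (n:ℝ) * ‖wY' - wY‖ ≤ (8 + 8 * B) / lam := by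
    rcases eq_or_lt_of_le hD0 with h0 | hpos
    · rw [← h0, mul_zero]
      positivity
    · rw [le_div_iff₀ hlam]
      have h8 : lam / 2 * ‖wY' - wY‖ ^ 2 * n ≤ 2 * ((2 + 2 * B) * ‖wY' - wY‖) := by
        have h9 := mul_le_mul_of_nonneg_right hstab2 (le_of_lt hn')
        calc lam / 2 * ‖wY' - wY‖ ^ 2 * n
            ≤ (1 / n) * (2 * ((2 + 2 * B) * ‖wY' - wY‖)) * n := h9
          _ = 2 * ((2 + 2 * B) * ‖wY' - wY‖) := by field_simp
      nlinarith [hpos, h8]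
  -- residual bounds
  have hres : ∀ (ww : H) (c : ℝ) (p : EuclideanSpace ℝ (Fin d)), ‖ww‖ ≤ B → |c| ≤ 1 →
      |c - ⟪ww, φ p⟫| ≤ 1 + B := by
    intro ww c p h1 hc
    calc |c - ⟪ww, φ p⟫| ≤ |c| + |⟪ww, φ p⟫| := abs_sub _ _
      _ ≤ 1 + B := add_le_add hc ((hip ww p).trans h1)
  -- final sum bound
  have hT : |(∑ i, (X j i - μ (z i)) * (y i - ⟪wY, φ (z i)⟫)) -
        (∑ i, (X' j i - μ (z' i)) * (y' i - ⟪wY', φ (z' i)⟫))| ≤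
      2 * (1 + B) + (8 + 8 * B) / lam := by
    rw [← Finset.sum_sub_distrib]
    calc |∑ i, ((X j i - μ (z i)) * (y i - ⟪wY, φ (z i)⟫)
            - (X' j i - μ (z' i)) * (y' i - ⟪wY', φ (z' i)⟫))|
        ≤ ∑ i, |(X j i - μ (z i)) * (y i - ⟪wY, φ (z i)⟫)
            - (X' j i - μ (z' i)) * (y' i - ⟪wY', φ (z' i)⟫)| :=
          Finset.abs_sum_le_sum_abs _ _
      _ = |(X j i₀ - μ (z i₀)) * (y i₀ - ⟪wY, φ (z i₀)⟫)
            - (X' j i₀ - μ (z' i₀)) * (y' i₀ - ⟪wY', φ (z' i₀)⟫)|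
          + ∑ i ∈ Finset.univ.erase i₀, |(X j i - μ (z i)) * (y i - ⟪wY, φ (z i)⟫)
            - (X' j i - μ (z' i)) * (y' i - ⟪wY', φ (z' i)⟫)| :=
          (Finset.add_sum_erase _ _ (Finset.mem_univ i₀)).symm
      _ ≤ 2 * (1 + B) + (8 + 8 * B) / lam := by
          have hterm0 : |(X j i₀ - μ (z i₀)) * (y i₀ - ⟪wY, φ (z i₀)⟫)
              - (X' j i₀ - μ (z' i₀)) * (y' i₀ - ⟪wY', φ (z' i₀)⟫)| ≤ 2 * (1 + B) := by
            have e1 : |(X j i₀ - μ (z i₀)) * (y i₀ - ⟪wY, φ (z i₀)⟫)| ≤ 1 + B := by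
              rw [abs_mul]
              calc |X j i₀ - μ (z i₀)| * |y i₀ - ⟪wY, φ (z i₀)⟫|
                  ≤ 1 * (1 + B) := mul_le_mul (hrX j i₀) (hres wY (y i₀) (z i₀) hwn (hy i₀))
                    (abs_nonneg _) zero_le_one
                _ = 1 + B := one_mul _
            have e2 : |(X' j i₀ - μ (z' i₀)) * (y' i₀ - ⟪wY', φ (z' i₀)⟫)| ≤ 1 + B := by
              rw [abs_mul]
              calc |X' j i₀ - μ (z' i₀)| * |y' i₀ - ⟪wY', φ (z' i₀)⟫|
                  ≤ 1 * (1 + B) := mul_le_mul (hrX' j i₀) (hres wY' (y' i₀) (z' i₀) hwn' (hy' i₀))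
                    (abs_nonneg _) zero_le_one
                _ = 1 + B := one_mul _
            calc |(X j i₀ - μ (z i₀)) * (y i₀ - ⟪wY, φ (z i₀)⟫)
                - (X' j i₀ - μ (z' i₀)) * (y' i₀ - ⟪wY', φ (z' i₀)⟫)|
                ≤ |(X j i₀ - μ (z i₀)) * (y i₀ - ⟪wY, φ (z i₀)⟫)|
                  + |(X' j i₀ - μ (z' i₀)) * (y' i₀ - ⟪wY', φ (z' i₀)⟫)| := abs_sub _ _
              _ ≤ 2 * (1 + B) := by linarith
          have hterm : ∑ i ∈ Finset.univ.erase i₀,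
              |(X j i - μ (z i)) * (y i - ⟪wY, φ (z i)⟫)
                - (X' j i - μ (z' i)) * (y' i - ⟪wY', φ (z' i)⟫)| ≤ (8 + 8 * B) / lam := by
            have hb : ∀ i ∈ Finset.univ.erase i₀,
                |(X j i - μ (z i)) * (y i - ⟪wY, φ (z i)⟫)
                  - (X' j i - μ (z' i)) * (y' i - ⟪wY', φ (z' i)⟫)| ≤ ‖wY' - wY‖ := by
              intro i hi
              obtain ⟨hx, hyy, hz⟩ := hnb i (Finset.ne_of_mem_erase hi)
              rw [← hx j, ← hyy, ← hz]
              have heq : (X j i - μ (z i)) * (y i - ⟪wY, φ (z i)⟫)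
                  - (X j i - μ (z i)) * (y i - ⟪wY', φ (z i)⟫)
                  = (X j i - μ (z i)) * ⟪wY' - wY, φ (z i)⟫ := by
                rw [inner_sub_left]; ring
              rw [heq, abs_mul]
              calc |X j i - μ (z i)| * |⟪wY' - wY, φ (z i)⟫|
                  ≤ 1 * ‖wY' - wY‖ := mul_le_mul (hrX j i) (hip _ _) (abs_nonneg _) zero_le_one
                _ = ‖wY' - wY‖ := one_mul _
            calc ∑ i ∈ Finset.univ.erase i₀, |(X j i - μ (z i)) * (y i - ⟪wY, φ (z i)⟫)
                  - (X' j i - μ (z' i)) * (y' i - ⟪wY', φ (z' i)⟫)|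
                ≤ (Finset.univ.erase i₀).card • ‖wY' - wY‖ :=
                  Finset.sum_le_card_nsmul _ _ _ hb
              _ = ((Finset.univ.erase i₀).card : ℝ) * ‖wY' - wY‖ := nsmul_eq_mul _ _
              _ ≤ (n:ℝ) * ‖wY' - wY‖ := by
                  apply mul_le_mul_of_nonneg_right _ hD0
                  have : (Finset.univ.erase i₀).card ≤ n := by
                    calc (Finset.univ.erase i₀).card ≤ (Finset.univ : Finset (Fin n)).card :=
                        Finset.card_le_card (Finset.erase_subset _ _)
                      _ = n := Finset.card_univ.trans (Fintype.card_fin n)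
                  exact_mod_cast this
              _ ≤ (8 + 8 * B) / lam := hnd
          linarith
  -- arithmetic finish
  have e1 : B = Real.sqrt 2 / Real.sqrt lam := Real.sqrt_div (by norm_num) lam
  have e2 : lam ^ ((3:ℝ) / 2) = lam * Real.sqrt lam := by
    rw [show (3:ℝ)/2 = 1 + 1/2 by norm_num, Real.rpow_add hlam, Real.rpow_one,
      ← Real.sqrt_eq_rpow]
  have hsl : (0:ℝ) < Real.sqrt lam := Real.sqrt_pos.mpr hlam
  have hs2 : (0:ℝ) ≤ Real.sqrt 2 := Real.sqrt_nonneg 2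
  calc |(∑ i, (X j i - μ (z i)) * (y i - ⟪wY, φ (z i)⟫)) -
        (∑ i, (X' j i - μ (z' i)) * (y' i - ⟪wY', φ (z' i)⟫))|
      ≤ 2 * (1 + B) + (8 + 8 * B) / lam := hT
    _ ≤ 4 * (1 + Real.sqrt 2 / Real.sqrt lam + 2 * Real.sqrt 2 / lam ^ ((3 : ℝ) / 2) + 2 / lam) := by
        rw [e1, e2]
        have h1 : (8 + 8 * (Real.sqrt 2 / Real.sqrt lam)) / lam
            = 8 / lam + 8 * (Real.sqrt 2 / (lam * Real.sqrt lam)) := by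
          field_simp
        rw [h1]
        have h2 : 0 ≤ Real.sqrt 2 * (Real.sqrt lam)⁻¹ :=
          mul_nonneg hs2 (inv_nonneg.mpr hsl.le)
        ring_nf
        linarith [h2]
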